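/- For every positive integer n, sum_{r=1}^{n-1} (-1)^r * (2(r+1)/(n+r+1)) * C(2r-1, r) * C(n+r+1, 2r+2) = -floor(n/2). -/

import Mathlib

open Finset

/-- Inner alternating sum: `∑ r, (-1)^r C(n,r) C(r,j) = if j = n then (-1)^n else 0`. -/
lemma aux_inner (n j : ℕ) (hj : j ≤ n) :
    ∑ r ∈ range (n + 1), (-1 : ℤ) ^ r * (n.choose r : ℤ) * (r.choose j : ℤ)
      = if j = n then (-1) ^ n else 0 := by
  have h0 : ∑ r ∈ range (n + 1), (-1 : ℤ) ^ r * (n.choose r : ℤ) * (r.choose j : ℤ)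
      = ∑ r ∈ Finset.Ico j (n + 1), (-1 : ℤ) ^ r * (n.choose r : ℤ) * (r.choose j : ℤ) := by
    rw [Finset.range_eq_Ico]
    refine (Finset.sum_subset (Finset.Ico_subset_Ico (Nat.zero_le j) le_rfl) ?_).symm
    intro r hr hr'
    have : r < j := by
      simp only [Finset.mem_Ico] at hr hr'
      omega
    rw [Nat.choose_eq_zero_of_lt this]
    ring
  rw [h0, Finset.sum_Ico_eq_sum_range]
  have h1 : ∀ i ∈ range (n + 1 - j), (-1 : ℤ) ^ (j + i) * (n.choose (j + i) : ℤ)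
      * ((j + i).choose j : ℤ)
      = ((-1) ^ j * (n.choose j : ℤ)) * ((-1) ^ i * ((n - j).choose i : ℤ)) := by
    intro i hi
    simp only [Finset.mem_range] at hi
    have hkn : j + i ≤ n := by omega
    have hc := Nat.choose_mul (n := n) (k := j + i) (s := j) (Nat.le_add_right _ _)
    have hc2 : (j + i) - j = i := by omega
    rw [hc2] at hc
    have : ((n.choose (j + i) : ℤ)) * ((j + i).choose j : ℤ)
        = (n.choose j : ℤ) * ((n - j).choose i : ℤ) := by exact_mod_cast congrArg (Nat.cast : ℕ → ℤ) hc
    rw [pow_add]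
    linear_combination ((-1 : ℤ) ^ j * (-1) ^ i) * this
  rw [Finset.sum_congr rfl h1, ← Finset.mul_sum]
  have h2 : n + 1 - j = (n - j) + 1 := by omega
  rw [h2, Int.alternating_sum_range_choose]
  rcases eq_or_ne j n with h | h
  · subst h; simp
  · have : n - j ≠ 0 := by omega
    rw [if_neg this, if_neg h, mul_zero]

/-- `∑ r, (-1)^r C(n,r) C(n+r,r) = (-1)^n`. -/
lemma aux_key (n : ℕ) :
    ∑ r ∈ range (n + 1), (-1 : ℤ) ^ r * (n.choose r : ℤ) * ((n + r).choose r : ℤ)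
      = (-1) ^ n := by
  have hv : ∀ r : ℕ, ((n + r).choose r : ℤ)
      = ∑ j ∈ range (n + 1), (r.choose j : ℤ) * (n.choose (n - j) : ℤ) := by
    intro r
    have : (n + r).choose r = (r + n).choose n := by
      rw [Nat.add_comm, Nat.choose_symm_add]
    rw [this, Nat.add_choose_eq]
    rw [Finset.Nat.sum_antidiagonal_eq_sum_range_succ (fun a b => r.choose a * n.choose b) n]
    push_cast
    rfl
  calc ∑ r ∈ range (n + 1), (-1 : ℤ) ^ r * (n.choose r : ℤ) * ((n + r).choose r : ℤ)
      = ∑ r ∈ range (n + 1), ∑ j ∈ range (n + 1),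
          (n.choose (n - j) : ℤ) * ((-1) ^ r * (n.choose r : ℤ) * (r.choose j : ℤ)) := by
        refine Finset.sum_congr rfl fun r _ => ?_
        rw [hv r, Finset.mul_sum]
        exact Finset.sum_congr rfl fun j _ => by ring
    _ = ∑ j ∈ range (n + 1), (n.choose (n - j) : ℤ) *
          ∑ r ∈ range (n + 1), ((-1) ^ r * (n.choose r : ℤ) * (r.choose j : ℤ)) := by
        rw [Finset.sum_comm]
        exact Finset.sum_congr rfl fun j _ => (Finset.mul_sum _ _ _).symm
    _ = (-1) ^ n := by
        rw [Finset.sum_congr rfl (fun j hj => by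
          rw [aux_inner n j (by simp only [Finset.mem_range] at hj; omega)])]
        simp only [mul_ite, mul_zero]
        rw [Finset.sum_ite_eq' (range (n + 1)) n
          (fun j => (n.choose (n - j) : ℤ) * (-1) ^ n)]
        simp

/-- `∑ r, (-1)^r C(2r,r) C(n+r,2r) = (-1)^n`. -/
lemma aux_B (n : ℕ) :
    ∑ r ∈ range (n + 1), (-1 : ℤ) ^ r * ((2 * r).choose r : ℤ) * ((n + r).choose (2 * r) : ℤ)
      = (-1) ^ n := by
  rw [← aux_key n]
  refine Finset.sum_congr rfl fun r hr => ?_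
  simp only [Finset.mem_range] at hr
  have hrn : r ≤ n := by omega
  have hc := Nat.choose_mul (n := n + r) (k := 2 * r) (s := r) (by omega)
  have h1 : n + r - r = n := by omega
  have h2 : 2 * r - r = r := by omega
  rw [h1, h2] at hc
  have : ((n + r).choose (2 * r) : ℤ) * ((2 * r).choose r : ℤ)
      = ((n + r).choose r : ℤ) * (n.choose r : ℤ) := by exact_mod_cast congrArg (Nat.cast : ℕ → ℤ) hc
  linear_combination ((-1 : ℤ) ^ r) * this

/-- The main integer sum `A n = ∑_{r<n} (-1)^r C(2r,r) C(n+r,2r+1)` equals `n % 2`. -/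
lemma aux_A (n : ℕ) :
    ∑ r ∈ range n, (-1 : ℤ) ^ r * ((2 * r).choose r : ℤ) * ((n + r).choose (2 * r + 1) : ℤ)
      = (n % 2 : ℕ) := by
  induction n with
  | zero => simp
  | succ n ih =>
    have step : ∑ r ∈ range (n + 1), (-1 : ℤ) ^ r * ((2 * r).choose r : ℤ)
        * ((n + 1 + r).choose (2 * r + 1) : ℤ)
        = (∑ r ∈ range (n + 1), (-1 : ℤ) ^ r * ((2 * r).choose r : ℤ)
            * ((n + r).choose (2 * r + 1) : ℤ))
          + (∑ r ∈ range (n + 1), (-1 : ℤ) ^ r * ((2 * r).choose r : ℤ)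
            * ((n + r).choose (2 * r) : ℤ)) := by
      rw [← Finset.sum_add_distrib]
      refine Finset.sum_congr rfl fun r _ => ?_
      have hp : (n + 1 + r).choose (2 * r + 1)
          = (n + r).choose (2 * r) + (n + r).choose (2 * r + 1) := by
        have : n + 1 + r = (n + r) + 1 := by omega
        rw [this, Nat.choose_succ_succ]
      rw [hp]
      push_cast
      ring
    have hext : ∑ r ∈ range (n + 1), (-1 : ℤ) ^ r * ((2 * r).choose r : ℤ)
        * ((n + r).choose (2 * r + 1) : ℤ)
        = ∑ r ∈ range n, (-1 : ℤ) ^ r * ((2 * r).choose r : ℤ)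
          * ((n + r).choose (2 * r + 1) : ℤ) := by
      rw [Finset.sum_range_succ]
      have : (n + n).choose (2 * n + 1) = 0 := Nat.choose_eq_zero_of_lt (by omega)
      rw [this]
      push_cast
      ring
    rw [step, hext, ih, aux_B]
    rcases Nat.even_or_odd n with h | h
    · rw [h.neg_one_pow]
      have h1 : n % 2 = 0 := Nat.even_iff.mp h
      have h2 : (n + 1) % 2 = 1 := by omega
      rw [h1, h2]; norm_num
    · rw [h.neg_one_pow]
      have h1 : n % 2 = 1 := Nat.odd_iff.mp h
      have h2 : (n + 1) % 2 = 0 := by omega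
      rw [h1, h2]; norm_num

theorem binomial_sum_floor (n : ℕ) (hn : 0 < n) :
    ∑ r ∈ Finset.Icc 1 (n - 1), (-1 : ℚ) ^ r * (2 * (r + 1) / (n + r + 1)) *
        ((2 * r - 1).choose r : ℚ) * ((n + r + 1).choose (2 * r + 2) : ℚ)
      = -(n / 2 : ℕ) := by
  have key : ∀ r ∈ Finset.Icc 1 (n - 1),
      (-1 : ℚ) ^ r * (2 * (r + 1) / (n + r + 1)) *
          ((2 * r - 1).choose r : ℚ) * ((n + r + 1).choose (2 * r + 2) : ℚ)
        = (((-1 : ℤ) ^ r * ((2 * r).choose r : ℤ) * ((n + r).choose (2 * r + 1) : ℤ) : ℤ) : ℚ)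
          / 2 := by
    intro r hr
    have hr1 : 1 ≤ r := (Finset.mem_Icc.mp hr).1
    have h1 : ((n + r + 1 : ℕ) : ℚ) * ((n + r).choose (2 * r + 1) : ℚ)
        = ((n + r + 1).choose (2 * r + 2) : ℚ) * ((2 * r + 2 : ℕ) : ℚ) := by
      exact_mod_cast congrArg (Nat.cast : ℕ → ℚ) (Nat.add_one_mul_choose_eq (n + r) (2 * r + 1))
    have h2n : (2 * r).choose r = 2 * ((2 * r - 1).choose r) := by
      obtain ⟨s, rfl⟩ := Nat.exists_eq_add_of_le hr1
      have e1 : 2 * (1 + s) = (2 * s + 1) + 1 := by omega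
      have e2 : 2 * (1 + s) - 1 = 2 * s + 1 := by omega
      have e3 : 1 + s = s + 1 := by omega
      rw [e2, e1, e3, Nat.choose_succ_succ]
      have : (2 * s + 1).choose s = (2 * s + 1).choose (s + 1) := by
        have := Nat.choose_symm (n := 2 * s + 1) (k := s + 1) (by omega)
        have e4 : 2 * s + 1 - (s + 1) = s := by omega
        rw [e4] at this
        omega
      simp only [Nat.succ_eq_add_one] at this ⊢
      omega
    have h2 : ((2 * r).choose r : ℚ) = 2 * ((2 * r - 1).choose r : ℚ) := by
      exact_mod_cast congrArg (Nat.cast : ℕ → ℚ) h2n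
    have hne : (n : ℚ) + r + 1 ≠ 0 := by positivity
    push_cast at h1 ⊢
    rw [h2]
    set a : ℚ := ((2 * r - 1).choose r : ℚ) with ha
    set b : ℚ := ((n + r).choose (2 * r + 1) : ℚ) with hb
    set c : ℚ := ((n + r + 1).choose (2 * r + 2) : ℚ) with hc
    field_simp
    linear_combination (-a) * h1
  rw [Finset.sum_congr rfl key, ← Finset.sum_div]
  have hIco : Finset.Ico 1 n = Finset.Icc 1 (n - 1) := by
    rw [show n = (n - 1) + 1 by omega, Finset.Ico_add_one_right_eq_Icc]
    congr 1
  have hsplit : ∑ r ∈ range n, (-1 : ℤ) ^ r * ((2 * r).choose r : ℤ)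
      * ((n + r).choose (2 * r + 1) : ℤ)
      = (n : ℤ) + ∑ r ∈ Finset.Icc 1 (n - 1), (-1 : ℤ) ^ r * ((2 * r).choose r : ℤ)
        * ((n + r).choose (2 * r + 1) : ℤ) := by
    rw [Finset.range_eq_Ico, Finset.sum_eq_sum_Ico_succ_bot hn, hIco]
    simp
  have hA := aux_A n
  rw [hsplit] at hA
  have hsum : ∑ r ∈ Finset.Icc 1 (n - 1), (-1 : ℤ) ^ r * ((2 * r).choose r : ℤ)
      * ((n + r).choose (2 * r + 1) : ℤ) = (n % 2 : ℕ) - (n : ℤ) := by omega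
  have hcast : ((∑ r ∈ Finset.Icc 1 (n - 1), (-1 : ℤ) ^ r * ((2 * r).choose r : ℤ)
      * ((n + r).choose (2 * r + 1) : ℤ) : ℤ) : ℚ)
      = ((n % 2 : ℕ) : ℚ) - (n : ℚ) := by exact_mod_cast congrArg (Int.cast : ℤ → ℚ) hsum
  push_cast
  push_cast at hcast
  rw [hcast]
  have hdm : 2 * (n / 2) + n % 2 = n := Nat.div_add_mod n 2
  have hdmq : 2 * ((n / 2 : ℕ) : ℚ) + ((n % 2 : ℕ) : ℚ) = (n : ℚ) := by exact_mod_cast hdm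
  linarith
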